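/- For every s ∈ K there exists a unique K-algebra automorphism φ_s of the field L with φ_s(f_λ) = f_λ · (1 + s·f_μ)^{ρ(λ)} for all λ ∈ M (the integer power taken in L, which makes sense since 1 + s·f_μ ≠ 0 because μ ≠ 0); moreover φ_0 is the identity and φ_s ∘ φ_t = φ_{s+t} for all s, t ∈ K. (This is formula (2) of the paper describing the action of the root subgroup H_μ on the B-semiinvariant rational functions f_λ.) -/

import Mathlib

open AddMonoidAlgebra

namespace Stmt5Aux

variable {K M : Type*} [Field K] [AddCommGroup M]

private theorem w_coeff (s : K) (μ : M) (hμ : ∀ k : ℕ, k • μ = 0 → k = 0) (m : ℕ) :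
    (((1 : AddMonoidAlgebra K M) + single μ s) ^ m).coeff 0 = 1 ∧
      ∀ c : M, (((1 : AddMonoidAlgebra K M) + single μ s) ^ m).coeff c ≠ 0 → ∃ k : ℕ, c = k • μ := by
  classical
  induction m with
  | zero =>
    constructor
    · simp [AddMonoidAlgebra.one_def, Finsupp.single_apply]
    · intro c hc
      rw [pow_zero, AddMonoidAlgebra.one_def, AddMonoidAlgebra.coeff_single, Finsupp.single_apply] at hc
      refine ⟨0, ?_⟩
      by_cases h : (0 : M) = c
      · simpa using h.symm
      · simp [h] at hc
  | succ m ih =>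
    have hrw : ∀ c : M,
        (((1 : AddMonoidAlgebra K M) + single μ s) ^ (m + 1)).coeff c
          = (((1 : AddMonoidAlgebra K M) + single μ s) ^ m).coeff c
            + (((1 : AddMonoidAlgebra K M) + single μ s) ^ m).coeff (c - μ) * s := by
      intro c
      rw [pow_succ, mul_add, mul_one, AddMonoidAlgebra.coeff_add, Finsupp.add_apply, AddMonoidAlgebra.coeff_mul_single_apply, sub_eq_add_neg]
    constructor
    · rw [hrw 0, ih.1]
      have h0 : (((1 : AddMonoidAlgebra K M) + single μ s) ^ m).coeff ((0 : M) - μ) = 0 := by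
        by_contra h
        obtain ⟨k, hk⟩ := ih.2 _ h
        have : (k + 1) • μ = 0 := by
          rw [succ_nsmul]
          rw [zero_sub] at hk
          rw [← hk]
          abel
        exact Nat.succ_ne_zero k (hμ _ this)
      rw [h0, zero_mul, add_zero]
    · intro c hc
      rw [hrw c] at hc
      by_cases h : (((1 : AddMonoidAlgebra K M) + single μ s) ^ m).coeff c ≠ 0
      · exact ih.2 c h
      · push_neg at h
        rw [h, zero_add] at hc
        have h' : (((1 : AddMonoidAlgebra K M) + single μ s) ^ m).coeff (c - μ) ≠ 0 :=
          fun h'' => hc (by rw [h'', zero_mul])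
        obtain ⟨k, hk⟩ := ih.2 _ h'
        exact ⟨k + 1, by rw [succ_nsmul, ← hk]; abel⟩

private theorem A_inj
    (L : Type*) [Field L] [Algebra (AddMonoidAlgebra K M) L]
    [IsFractionRing (AddMonoidAlgebra K M) L]
    [Algebra K L] [IsScalarTower K (AddMonoidAlgebra K M) L]
    (ρ : M →+ ℤ) (μ : M) (h2 : ρ μ = -1) (s : K) (v : Lˣ)
    (hv : (v : L) = algebraMap (AddMonoidAlgebra K M) L
      ((1 : AddMonoidAlgebra K M) + single μ s))
    (B : AddMonoidAlgebra K M →ₐ[K] L)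
    (hB : ∀ l : M, B (of' K M l)
      = algebraMap (AddMonoidAlgebra K M) L (of' K M l) * ((v ^ (ρ l) : Lˣ) : L)) :
    Function.Injective B := by
  have hμ : ∀ k : ℕ, k • μ = 0 → k = 0 := by
    intro k hk
    have := congrArg ρ hk
    rw [map_nsmul, h2, map_zero, nsmul_eq_mul] at this
    omega
  set gA : AddMonoidAlgebra K M →ₐ[K] L := IsScalarTower.toAlgHom K (AddMonoidAlgebra K M) L
    with hgA
  have hgAeq : ∀ z : AddMonoidAlgebra K M, gA z = algebraMap (AddMonoidAlgebra K M) L z :=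
    fun z => rfl
  have hginj : Function.Injective gA := by
    intro a b h
    exact IsFractionRing.injective (AddMonoidAlgebra K M) L (by rw [← hgAeq, ← hgAeq, h])
  -- B on a general element
  have hBx : ∀ x : AddMonoidAlgebra K M,
      B x = x.coeff.sum fun a c => c •
        (algebraMap (AddMonoidAlgebra K M) L (of' K M a) * ((v ^ (ρ a) : Lˣ) : L)) := by
    intro x
    conv_lhs => rw [← AddMonoidAlgebra.sum_coeff_single x]
    rw [map_finsuppSum]
    refine Finsupp.sum_congr fun a ha => ?_
    have hsg : (single a (x.coeff a) : AddMonoidAlgebra K M) = (x.coeff a) • of' K M a := by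
      rw [of'_apply, AddMonoidAlgebra.smul_single, smul_eq_mul, mul_one]
    rw [hsg, map_smul, hB]
  rw [injective_iff_map_eq_zero]
  intro x hx
  by_contra hxne
  obtain ⟨l₀, hl₀mem, hmax⟩ := Finset.exists_max_image x.coeff.support (fun l => ρ l)
    (Finsupp.support_nonempty_iff.mpr (mt AddMonoidAlgebra.coeff_eq_zero.mp hxne))
  set N : ℕ := x.coeff.support.sup (fun l => (ρ l).natAbs) with hN
  have hNl : ∀ l ∈ x.coeff.support, (0 : ℤ) ≤ ρ l + N := by
    intro l hl
    have h1 : (ρ l).natAbs ≤ x.coeff.support.sup (fun l => (ρ l).natAbs) := Finset.le_sup (f := fun l => (ρ l).natAbs) hl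
    rw [← hN] at h1
    omega
  set w : AddMonoidAlgebra K M := 1 + single μ s with hw
  have hgw : gA w = (v : L) := by rw [hgAeq, hv]
  set y : AddMonoidAlgebra K M :=
    x.coeff.sum fun a c => c • (of' K M a * w ^ (ρ a + N).toNat) with hy
  have key : gA y = B x * (v : L) ^ (N : ℤ) := by
    rw [hBx, Finsupp.sum_mul, hy, map_finsuppSum]
    refine Finsupp.sum_congr fun a ha => ?_
    rw [map_smul, map_mul, map_pow, hgw, hgAeq, smul_mul_assoc]
    congr 1
    rw [mul_assoc]
    congr 1
    rw [Units.val_zpow_eq_zpow_val, ← zpow_natCast (v : L) ((ρ a + ↑N).toNat),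
      Int.toNat_of_nonneg (hNl a ha), zpow_add₀ (Units.ne_zero v), zpow_natCast]
  have hy0 : y = 0 := by
    apply hginj
    rw [key, hx, zero_mul, map_zero]
  -- evaluate y at l₀
  have hyl₀ : y.coeff l₀ = x.coeff l₀ := by
    rw [hy, Finsupp.sum, AddMonoidAlgebra.coeff_sum, Finsupp.finset_sum_apply]
    rw [Finset.sum_eq_single_of_mem l₀ hl₀mem]
    · rw [AddMonoidAlgebra.coeff_smul_apply, of'_apply, AddMonoidAlgebra.coeff_single_mul_apply, one_mul,
        neg_add_cancel, (w_coeff s μ hμ _).1, smul_eq_mul, mul_one]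
    · intro a ha hne
      rw [AddMonoidAlgebra.coeff_smul_apply, of'_apply, AddMonoidAlgebra.coeff_single_mul_apply, one_mul]
      have hz : (w ^ (ρ a + ↑N).toNat).coeff (-a + l₀) = 0 := by
        by_contra h
        obtain ⟨k, hk⟩ := (w_coeff s μ hμ _).2 _ h
        have := congrArg ρ hk
        rw [map_add, map_neg, map_nsmul, h2, nsmul_eq_mul] at this
        have hle : ρ a ≤ ρ l₀ := hmax a ha
        have hk0 : k = 0 := by omega
        rw [hk0, zero_smul] at hk
        exact hne (neg_add_eq_zero.mp hk)
      rw [hz, smul_eq_mul, mul_zero]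
  rw [hy0] at hyl₀
  simp only [AddMonoidAlgebra.coeff_zero, Finsupp.coe_zero, Pi.zero_apply] at hyl₀
  exact (Finsupp.mem_support_iff.mp hl₀mem) hyl₀.symm

end Stmt5Aux

/-- For every `s ∈ K` there is a unique `K`-algebra automorphism `φ_s` of the fraction field `L`
of `K[M]` with `φ_s f_λ = f_λ (1 + s f_μ)^{ρ(λ)}` for all `λ ∈ M`; moreover `φ_0 = id` and
`φ_s ∘ φ_t = φ_{s+t}`. -/
theorem stmt5 {K M : Type*} [Field K] [CharZero K] [AddCommGroup M]
    [Module.Free ℤ M] [Module.Finite ℤ M]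
    (L : Type*) [Field L] [Algebra (AddMonoidAlgebra K M) L]
    [IsFractionRing (AddMonoidAlgebra K M) L]
    [Algebra K L] [IsScalarTower K (AddMonoidAlgebra K M) L]
    (ρ : M →+ ℤ) (μ : M) (h2 : ρ μ = -1) :
    ∃ φ : K → (L ≃ₐ[K] L),
      (∀ (s : K) (l : M),
        φ s (algebraMap (AddMonoidAlgebra K M) L (of' K M l))
          = algebraMap (AddMonoidAlgebra K M) L (of' K M l)
            * (1 + s • algebraMap (AddMonoidAlgebra K M) L (of' K M μ)) ^ (ρ l))
      ∧ (∀ (s : K) (ψ : L ≃ₐ[K] L),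
          (∀ l : M,
            ψ (algebraMap (AddMonoidAlgebra K M) L (of' K M l))
              = algebraMap (AddMonoidAlgebra K M) L (of' K M l)
                * (1 + s • algebraMap (AddMonoidAlgebra K M) L (of' K M μ)) ^ (ρ l))
          → ψ = φ s)
      ∧ φ 0 = AlgEquiv.refl
      ∧ (∀ (s t : K) (x : L), φ s (φ t x) = φ (s + t) x) := by
  classical
  haveI : TwoUniqueSums M :=
    TwoUniqueSums.of_injective_addHom (Module.Free.chooseBasis ℤ M).repr.toLinearMap.toAddMonoidHom.toAddHom
      (Module.Free.chooseBasis ℤ M).repr.injective inferInstance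
  haveI : IsDomain (AddMonoidAlgebra K M) := NoZeroDivisors.to_isDomain _
  set F : M → L := fun l => algebraMap (AddMonoidAlgebra K M) L (of' K M l) with hF
  have hFmul : ∀ a b : M, F (a + b) = F a * F b := by
    intro a b
    simp only [hF]
    rw [← map_mul, of'_apply, of'_apply, of'_apply, AddMonoidAlgebra.single_mul_single, one_mul]
  have hF0 : F 0 = 1 := by
    simp only [hF]
    rw [of'_apply, ← AddMonoidAlgebra.one_def, map_one]
  have halg_smul : ∀ (s : K) (z : AddMonoidAlgebra K M),
      algebraMap (AddMonoidAlgebra K M) L (s • z) = s • algebraMap (AddMonoidAlgebra K M) L z :=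
    fun s z => map_smul (IsScalarTower.toAlgHom K (AddMonoidAlgebra K M) L) s z
  have hsingle : ∀ s : K, (single μ s : AddMonoidAlgebra K M) = s • of' K M μ := by
    intro s
    rw [of'_apply, AddMonoidAlgebra.smul_single, smul_eq_mul, mul_one]
  have hu : ∀ s : K, (1 : L) + s • F μ
      = algebraMap (AddMonoidAlgebra K M) L ((1 : AddMonoidAlgebra K M) + single μ s) := by
    intro s
    rw [map_add, map_one, hsingle, halg_smul]
  have hμ0 : μ ≠ 0 := by
    intro hh
    rw [hh, map_zero] at h2
    exact absurd h2 (by norm_num)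
  have hune : ∀ s : K, (1 : L) + s • F μ ≠ 0 := by
    intro s h
    rw [hu] at h
    have h0 : ((1 : AddMonoidAlgebra K M) + single μ s) = 0 :=
      IsFractionRing.injective (AddMonoidAlgebra K M) L (by rw [h, map_zero])
    have h1 : ((1 : AddMonoidAlgebra K M) + single μ s).coeff 0 = (0 : AddMonoidAlgebra K M).coeff 0 := by
      rw [h0]
    rw [AddMonoidAlgebra.coeff_add, Finsupp.add_apply] at h1
    simp only [AddMonoidAlgebra.coeff_zero, Finsupp.coe_zero, Pi.zero_apply] at h1
    rw [AddMonoidAlgebra.one_def] at h1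
    rw [AddMonoidAlgebra.coeff_single, AddMonoidAlgebra.coeff_single, Finsupp.single_apply,
      Finsupp.single_apply] at h1
    simp only [if_pos rfl, if_neg hμ0] at h1
    rw [add_zero] at h1
    exact one_ne_zero h1
  set v : K → Lˣ := fun s => Units.mk0 _ (hune s) with hvdef
  have hv : ∀ s : K, (v s : L) = 1 + s • F μ := fun s => rfl
  -- the algebra maps K[M] → L
  set B : K → (AddMonoidAlgebra K M →ₐ[K] L) := fun s => (AddMonoidAlgebra.lift K L M)
    { toFun := fun m => F (Multiplicative.toAdd m) * ((v s ^ ρ (Multiplicative.toAdd m) : Lˣ) : L)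
      map_one' := by
        simp only [toAdd_one, map_zero, zpow_zero, Units.val_one, mul_one, hF0]
      map_mul' := by
        intro a b
        simp only [toAdd_mul, map_add]
        rw [hFmul, zpow_add, Units.val_mul]
        ring } with hBdef
  have hB : ∀ (s : K) (l : M), B s (of' K M l) = F l * ((v s ^ ρ l : Lˣ) : L) := by
    intro s l
    simp only [hBdef]
    rw [AddMonoidAlgebra.lift_of']
    rfl
  have hinj : ∀ s : K, Function.Injective (B s) := fun s =>
    Stmt5Aux.A_inj L ρ μ h2 s (v s) ((hv s).trans (hu s)) (B s) (hB s)
  set Φ : K → (L →ₐ[K] L) := fun s => IsFractionRing.liftAlgHom (hinj s) with hΦdef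
  have hΦ : ∀ (s : K) (l : M), Φ s (F l) = F l * ((v s ^ ρ l : Lˣ) : L) := by
    intro s l
    simp only [hΦdef, hF]
    rw [IsFractionRing.liftAlgHom_apply, IsFractionRing.lift_algebraMap]
    exact hB s l
  -- extensionality
  have hext : ∀ j k : L →ₐ[K] L, (∀ l : M, j (F l) = k (F l)) → j = k := by
    intro j k h
    have h1 : j.comp (IsScalarTower.toAlgHom K (AddMonoidAlgebra K M) L)
        = k.comp (IsScalarTower.toAlgHom K (AddMonoidAlgebra K M) L) := by
      apply AddMonoidAlgebra.algHom_ext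
      intro x
      have hx := h x
      simp only [hF] at hx
      simpa only [AlgHom.comp_apply, IsScalarTower.coe_toAlgHom', of'_apply] using hx
      exact Subsingleton.elim _ _
    apply AlgHom.coe_ringHom_injective
    apply IsLocalization.ringHom_ext (nonZeroDivisors (AddMonoidAlgebra K M))
    exact RingHom.ext fun x => DFunLike.congr_fun h1 x
  -- multiplicativity in s
  have hvmul : ∀ s t : K, Φ s ((v t : L)) * (v s : L) = (v (s + t) : L) := by
    intro s t
    rw [hv t, map_add, map_one, map_smul, hΦ s μ, h2]
    rw [Units.val_zpow_eq_zpow_val, zpow_neg_one]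
    rw [add_mul, one_mul, smul_mul_assoc, mul_assoc, inv_mul_cancel₀ (Units.ne_zero (v s)),
      mul_one, hv s, hv (s + t), add_smul, add_assoc]
  have hvmap : ∀ s t : K, Φ s ((v t : L)) = (v (s + t) : L) * ((v s : L))⁻¹ := by
    intro s t
    rw [eq_mul_inv_iff_mul_eq₀ (Units.ne_zero (v s))]
    exact hvmul s t
  have hcomp : ∀ s t : K, (Φ s).comp (Φ t) = Φ (s + t) := by
    intro s t
    apply hext
    intro l
    rw [AlgHom.comp_apply, hΦ t l, map_mul, hΦ s l, hΦ (s + t) l]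
    simp only [Units.val_zpow_eq_zpow_val]
    rw [map_zpow₀, hvmap s t]
    rw [mul_zpow, inv_zpow]
    have ha : ((v s : L)) ^ (ρ l) ≠ 0 := zpow_ne_zero _ (Units.ne_zero _)
    field_simp
  have hid : Φ 0 = AlgHom.id K L := by
    apply hext
    intro l
    have hv0 : (v 0 : L) = 1 := by rw [hv]; simp
    have hv0' : v 0 = 1 := Units.ext hv0
    rw [hΦ 0 l, hv0', one_zpow, Units.val_one, mul_one, AlgHom.id_apply]
  have hinv1 : ∀ s : K, (Φ s).comp (Φ (-s)) = AlgHom.id K L := by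
    intro s
    rw [hcomp, add_neg_cancel, hid]
  have hinv2 : ∀ s : K, (Φ (-s)).comp (Φ s) = AlgHom.id K L := by
    intro s
    rw [hcomp, neg_add_cancel, hid]
  refine ⟨fun s => AlgEquiv.ofAlgHom (Φ s) (Φ (-s)) (hinv1 s) (hinv2 s), ?_, ?_, ?_, ?_⟩
  · intro s l
    show Φ s (F l) = F l * ((1 : L) + s • F μ) ^ (ρ l)
    rw [hΦ s l, Units.val_zpow_eq_zpow_val, hv]
  · intro s ψ hψ
    have hψ' : (ψ : L →ₐ[K] L) = Φ s := by
      apply hext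
      intro l
      show ψ (F l) = Φ s (F l)
      rw [hψ l, hΦ s l, Units.val_zpow_eq_zpow_val, hv]
    apply AlgEquiv.ext
    intro x
    exact DFunLike.congr_fun hψ' x
  · apply AlgEquiv.ext
    intro x
    show Φ 0 x = x
    rw [hid, AlgHom.id_apply]
  · intro s t x
    show Φ s (Φ t x) = Φ (s + t) x
    rw [← hcomp s t, AlgHom.comp_apply]
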